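/- Let α > 0, set φ_α(ξ) = ξ^{2(α+1)} − ξ², ξ₁(α) = (1/(α+1))^{1/(2α)}, ξ₂(α) = (1/((α+1)(2α+1)))^{1/(2α)}, and fix δ with ξ₂(α) < δ < ξ₁(α). Then there exist constants C > 0 and μ₀ ≥ 1 such that for all μ ≥ μ₀, |∫_{μ^{−1/(2α)}}^{δ} e^{i μ^{1+1/α} φ_α(ξ)} dξ| ≤ C μ^{−1−1/(2α)}. -/

import Mathlib

open MeasureTheory Filter

/-- The rescaled phase `φ_α(ξ) = ξ^{2(α+1)} - ξ²`. -/
noncomputable def phase (α ξ : ℝ) : ℝ := ξ ^ (2 * (α + 1)) - ξ ^ 2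

-- derivative of the phase
lemma hasDerivAt_phase (α : ℝ) {ξ : ℝ} (hξ : 0 < ξ) :
    HasDerivAt (phase α) (2 * (α + 1) * ξ ^ (2 * α + 1 : ℝ) - 2 * ξ) ξ := by
  have h1 : HasDerivAt (fun x : ℝ => x ^ (2 * (α + 1) : ℝ))
      ((2 * (α + 1)) * ξ ^ (2 * (α + 1) - 1 : ℝ)) ξ :=
    Real.hasDerivAt_rpow_const (Or.inl hξ.ne')
  have h2 : HasDerivAt (fun x : ℝ => x ^ 2) (2 * ξ) ξ := by
    simpa using hasDerivAt_pow 2 ξ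
  have := h1.sub h2
  have he : (2 * (α + 1) - 1 : ℝ) = 2 * α + 1 := by ring
  rw [he] at this
  exact this

-- derivative of ψ
lemma hasDerivAt_psi (α : ℝ) {ξ : ℝ} (hξ : 0 < ξ) :
    HasDerivAt (fun ξ : ℝ => 2 * (α + 1) * ξ ^ (2 * α + 1 : ℝ) - 2 * ξ)
      (2 * (α + 1) * ((2 * α + 1) * ξ ^ (2 * α : ℝ)) - 2) ξ := by
  have h1 : HasDerivAt (fun x : ℝ => x ^ (2 * α + 1 : ℝ))
      ((2 * α + 1) * ξ ^ (2 * α + 1 - 1 : ℝ)) ξ :=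
    Real.hasDerivAt_rpow_const (Or.inl hξ.ne')
  have he : (2 * α + 1 - 1 : ℝ) = 2 * α := by ring
  rw [he] at h1
  have := (h1.const_mul (2 * (α + 1))).sub ((hasDerivAt_id ξ).const_mul 2)
  simp only [id_eq, mul_one] at this
  exact this

lemma div_alg (f ψ ψd D : ℂ) (hD : D ≠ 0) (hψ : ψ ≠ 0) :
    (D * ψ * f * (D * ψ) - f * (D * ψd)) / (D * ψ) ^ 2 = f - f * ψd / (D * ψ ^ 2) := by
  field_simp

lemma osc_bound {a b : ℝ} (hab : a ≤ b) {φ ψ ψd : ℝ → ℝ} {L m : ℝ}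
    (hL : 0 < L) (hm : 0 < m)
    (hφ : ∀ x ∈ Set.uIcc a b, HasDerivAt φ (ψ x) x)
    (hψ : ∀ x ∈ Set.uIcc a b, HasDerivAt ψ (ψd x) x)
    (hψd_cont : ContinuousOn ψd (Set.uIcc a b))
    (hψ_le : ∀ x ∈ Set.uIcc a b, m ≤ |ψ x|)
    {B : ℝ → ℝ} (hB : ∀ x ∈ Set.uIcc a b, |ψd x| / (ψ x) ^ 2 ≤ B x)
    (hBint : IntervalIntegrable B volume a b) :
    ‖∫ x in a..b, Complex.exp (Complex.I * ((L * φ x : ℝ) : ℂ))‖ ≤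
      2 / (L * m) + (1 / L) * |∫ x in a..b, B x| := by
  set f : ℝ → ℂ := fun x => Complex.exp (Complex.I * ((L * φ x : ℝ) : ℂ)) with hf
  set g : ℝ → ℂ := fun x => f x / (Complex.I * L * (ψ x : ℂ)) with hg
  set r : ℝ → ℂ := fun x => f x * (ψd x : ℂ) / (Complex.I * L * (ψ x : ℂ) ^ 2) with hr
  have hψ_ne : ∀ x ∈ Set.uIcc a b, ψ x ≠ 0 := by
    intro x hx h
    have := hψ_le x hx
    rw [h, abs_zero] at this
    linarith
  have hf_norm : ∀ x, ‖f x‖ = 1 := by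
    intro x
    simp [hf, Complex.norm_exp, Complex.mul_re]
  have hfd : ∀ x ∈ Set.uIcc a b, HasDerivAt f (Complex.I * L * ψ x * f x) x := by
    intro x hx
    have h1 : HasDerivAt (fun y => (L * φ y : ℝ)) (L * ψ x) x := (hφ x hx).const_mul L
    have h4 := ((h1.ofReal_comp).const_mul Complex.I).cexp
    convert h4 using 1
    simp only [hf]
    push_cast
    ring
  have hgd : ∀ x ∈ Set.uIcc a b, HasDerivAt g (f x - r x) x := by
    intro x hx
    have hd : HasDerivAt (fun y => Complex.I * L * (ψ y : ℂ)) (Complex.I * L * (ψd x : ℂ)) x :=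
      (hψ x hx).ofReal_comp.const_mul (Complex.I * L)
    have hLne : (L : ℂ) ≠ 0 := by exact_mod_cast hL.ne'
    have hψne : ((ψ x : ℝ) : ℂ) ≠ 0 := by exact_mod_cast hψ_ne x hx
    have hden : Complex.I * L * (ψ x : ℂ) ≠ 0 :=
      mul_ne_zero (mul_ne_zero Complex.I_ne_zero hLne) hψne
    have h := (hfd x hx).div hd hden
    refine h.congr_deriv ?_
    symm
    exact (div_alg (f x) (ψ x) (ψd x) (Complex.I * L)
      (mul_ne_zero Complex.I_ne_zero hLne) hψne).symm
  have hcont_f : ContinuousOn f (Set.uIcc a b) :=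
    fun x hx => ((hfd x hx).continuousAt).continuousWithinAt
  have hcont_ψ : ContinuousOn ψ (Set.uIcc a b) :=
    fun x hx => ((hψ x hx).continuousAt).continuousWithinAt
  have hcont_r : ContinuousOn r (Set.uIcc a b) := by
    apply ContinuousOn.div
    · exact hcont_f.mul (Complex.continuous_ofReal.comp_continuousOn hψd_cont)
    · exact continuousOn_const.mul
        ((Complex.continuous_ofReal.comp_continuousOn hcont_ψ).pow 2)
    · intro x hx
      have hLne : (L : ℂ) ≠ 0 := by exact_mod_cast hL.ne'
      have hψne : ((ψ x : ℝ) : ℂ) ≠ 0 := by exact_mod_cast hψ_ne x hx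
      exact mul_ne_zero (mul_ne_zero Complex.I_ne_zero hLne) (pow_ne_zero 2 hψne)
  have hint_f : IntervalIntegrable f volume a b := hcont_f.intervalIntegrable
  have hint_r : IntervalIntegrable r volume a b := hcont_r.intervalIntegrable
  have hFTC : ∫ x in a..b, (f x - r x) = g b - g a :=
    intervalIntegral.integral_eq_sub_of_hasDerivAt hgd (hint_f.sub hint_r)
  have hsplit : ∫ x in a..b, f x = (g b - g a) + ∫ x in a..b, r x := by
    rw [← hFTC, intervalIntegral.integral_sub hint_f hint_r]
    ring
  have hg_norm : ∀ x ∈ Set.uIcc a b, ‖g x‖ ≤ 1 / (L * m) := by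
    intro x hx
    have h1 : ‖g x‖ = 1 / (L * |ψ x|) := by
      rw [hg]
      simp only [norm_div, norm_mul, Complex.norm_I, hf_norm, Complex.norm_real,
        Real.norm_eq_abs]
      rw [abs_of_pos hL]
      ring
    rw [h1]
    apply one_div_le_one_div_of_le (by positivity)
    exact mul_le_mul_of_nonneg_left (hψ_le x hx) hL.le
  have hr_bound : ∀ x ∈ Set.uIcc a b, ‖r x‖ ≤ (1 / L) * B x := by
    intro x hx
    have h1 : ‖r x‖ = |ψd x| / (L * (ψ x) ^ 2) := by
      rw [hr]
      simp only [norm_div, norm_mul, Complex.norm_I, hf_norm, norm_pow, Complex.norm_real,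
        Real.norm_eq_abs]
      rw [abs_of_pos hL, sq_abs]
      ring
    rw [h1]
    have h2 : |ψd x| / (L * (ψ x) ^ 2) = (1 / L) * (|ψd x| / (ψ x) ^ 2) := by
      field_simp
    rw [h2]
    exact mul_le_mul_of_nonneg_left (hB x hx) (by positivity)
  have h_int_r : ‖∫ x in a..b, r x‖ ≤ (1 / L) * |∫ x in a..b, B x| := by
    have h := intervalIntegral.norm_integral_le_of_norm_le
      (f := r) (g := fun x => (1 / L) * B x) (μ := volume) (a := a) (b := b)
      hab ?_ (hBint.const_mul (1 / L))
    · calc ‖∫ x in a..b, r x‖ ≤ |∫ x in a..b, (1 / L) * B x| := h.trans (le_abs_self _)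
        _ = (1 / L) * |∫ x in a..b, B x| := by
          rw [intervalIntegral.integral_const_mul, abs_mul, abs_of_pos (by positivity)]
    · apply Filter.Eventually.of_forall
      intro x hx
      exact hr_bound x (Set.uIoc_subset_uIcc (by rwa [Set.uIoc_of_le hab]))
  calc ‖∫ x in a..b, f x‖ = ‖(g b - g a) + ∫ x in a..b, r x‖ := by rw [hsplit]
    _ ≤ ‖g b - g a‖ + ‖∫ x in a..b, r x‖ := norm_add_le _ _
    _ ≤ (‖g b‖ + ‖g a‖) + ‖∫ x in a..b, r x‖ := by
        have := norm_sub_le (g b) (g a); linarith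
    _ ≤ (1 / (L * m) + 1 / (L * m)) + (1 / L) * |∫ x in a..b, B x| := by
        have h1 := hg_norm b Set.right_mem_uIcc
        have h2 := hg_norm a Set.left_mem_uIcc
        linarith
    _ = 2 / (L * m) + (1 / L) * |∫ x in a..b, B x| := by ring
/-- For `α > 0` and `ξ₂(α) < δ < ξ₁(α)` (where `ξ₁(α) = (1/(α+1))^{1/(2α)}` and
`ξ₂(α) = (1/((α+1)(2α+1)))^{1/(2α)}`), there exist `C > 0` and `μ₀ ≥ 1` such that for all
`μ ≥ μ₀`, `|∫_{μ^{-1/(2α)}}^δ e^{iμ^{1+1/α} φ_α(ξ)} dξ| ≤ C μ^{-1-1/(2α)}`. -/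
theorem nonstationary_inner_bound (α δ : ℝ) (hα : 0 < α)
    (hδ₂ : (1 / ((α + 1) * (2 * α + 1))) ^ (1 / (2 * α) : ℝ) < δ)
    (hδ₁ : δ < (1 / (α + 1)) ^ (1 / (2 * α) : ℝ)) :
    ∃ C : ℝ, 0 < C ∧
      ∃ μ₀ : ℝ, 1 ≤ μ₀ ∧
        ∀ μ : ℝ, μ₀ ≤ μ →
          ‖∫ ξ in (μ ^ (-(1 / (2 * α)) : ℝ))..δ,
              Complex.exp (Complex.I * ((μ ^ (1 + 1 / α) * phase α ξ : ℝ) : ℂ))‖ ≤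
            C * μ ^ (-1 - 1 / (2 * α) : ℝ) := by
  have hα1 : (0:ℝ) < α + 1 := by linarith
  have h2α : (0:ℝ) < 2 * α := by linarith
  have hδpos : 0 < δ := lt_trans (Real.rpow_pos_of_pos (by positivity) _) hδ₂
  have hδlt1 : δ < 1 := by
    have h1 : (1 / (α + 1) : ℝ) < 1 := by rw [div_lt_one hα1]; linarith
    calc δ < (1 / (α + 1)) ^ (1 / (2 * α) : ℝ) := hδ₁
      _ < 1 := Real.rpow_lt_one (by positivity) h1 (by positivity)
  have hδ2α : (α + 1) * δ ^ (2 * α : ℝ) < 1 := by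
    have h := Real.rpow_lt_rpow hδpos.le hδ₁ h2α
    rw [← Real.rpow_mul (by positivity), one_div_mul_cancel h2α.ne', Real.rpow_one] at h
    rw [mul_comm]
    exact (lt_div_iff₀ hα1).mp h
  set c : ℝ := 1 - (α + 1) * δ ^ (2 * α : ℝ) with hc_def
  have hc : 0 < c := by rw [hc_def]; linarith
  set M : ℝ := 2 * (α + 1) * (2 * α + 1) + 2 with hM_def
  have hM : 0 < M := by
    have h1 : (0:ℝ) < 2 * (α + 1) * (2 * α + 1) := by positivity
    linarith
  refine ⟨1 / c + M / (4 * c ^ 2), by positivity, max 1 (δ ^ (-(2 * α) : ℝ)), le_max_left _ _, ?_⟩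
  intro μ hμ
  have hμ1 : (1:ℝ) ≤ μ := le_trans (le_max_left _ _) hμ
  have hμpos : (0:ℝ) < μ := lt_of_lt_of_le one_pos hμ1
  set a : ℝ := μ ^ (-(1 / (2 * α)) : ℝ) with ha_def
  set L : ℝ := μ ^ (1 + 1 / α : ℝ) with hL_def
  have ha_pos : 0 < a := Real.rpow_pos_of_pos hμpos _
  have hL : 0 < L := Real.rpow_pos_of_pos hμpos _
  have ha_le : a ≤ δ := by
    have h1 : δ ^ (-(2 * α) : ℝ) ≤ μ := le_trans (le_max_right _ _) hμ
    have h2 : μ ^ (-(1 / (2 * α)) : ℝ) ≤ (δ ^ (-(2 * α) : ℝ)) ^ (-(1 / (2 * α)) : ℝ) :=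
      Real.rpow_le_rpow_of_nonpos (Real.rpow_pos_of_pos hδpos _) h1
        (neg_nonpos.mpr (by positivity))
    rw [← Real.rpow_mul hδpos.le] at h2
    have he : ((-(2 * α)) * (-(1 / (2 * α))) : ℝ) = 1 := by field_simp
    rw [he, Real.rpow_one] at h2
    exact h2
  -- pointwise facts on [a, δ]
  have hIcc : Set.uIcc a δ = Set.Icc a δ := Set.uIcc_of_le ha_le
  have hmem : ∀ x ∈ Set.uIcc a δ, a ≤ x ∧ x ≤ δ := by
    intro x hx; rw [hIcc] at hx; exact ⟨hx.1, hx.2⟩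
  have hxpos : ∀ x ∈ Set.uIcc a δ, 0 < x := fun x hx => lt_of_lt_of_le ha_pos (hmem x hx).1
  set ψ : ℝ → ℝ := fun x => 2 * (α + 1) * x ^ (2 * α + 1 : ℝ) - 2 * x with hψ_def
  set ψd : ℝ → ℝ := fun x => 2 * (α + 1) * ((2 * α + 1) * x ^ (2 * α : ℝ)) - 2 with hψd_def
  have hψ_ub : ∀ x ∈ Set.uIcc a δ, ψ x ≤ -(2 * c * x) := by
    intro x hx
    have hx0 := hxpos x hx
    have hxδ := (hmem x hx).2
    have hsplit : x ^ (2 * α + 1 : ℝ) = x ^ (2 * α : ℝ) * x := by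
      rw [Real.rpow_add hx0, Real.rpow_one]
    have hle : x ^ (2 * α : ℝ) ≤ δ ^ (2 * α : ℝ) := Real.rpow_le_rpow hx0.le hxδ h2α.le
    rw [hψ_def]
    simp only
    rw [hsplit, hc_def]
    nlinarith [mul_le_mul_of_nonneg_left hle (by positivity : (0:ℝ) ≤ 2 * (α + 1) * x)]
  have hψ_le : ∀ x ∈ Set.uIcc a δ, 2 * c * a ≤ |ψ x| := by
    intro x hx
    have h1 := hψ_ub x hx
    have h2 : 2 * c * a ≤ 2 * c * x := by
      have := (hmem x hx).1
      nlinarith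
    calc 2 * c * a ≤ 2 * c * x := h2
      _ ≤ -ψ x := by linarith
      _ ≤ |ψ x| := neg_le_abs _
  have hψd_bd : ∀ x ∈ Set.uIcc a δ, |ψd x| ≤ M := by
    intro x hx
    have hx0 := hxpos x hx
    have hx1 : x ≤ 1 := le_trans (hmem x hx).2 hδlt1.le
    have h1 : x ^ (2 * α : ℝ) ≤ 1 := Real.rpow_le_one hx0.le hx1 h2α.le
    have h0 : 0 ≤ x ^ (2 * α : ℝ) := Real.rpow_nonneg hx0.le _
    rw [hψd_def]
    simp only
    rw [abs_le]
    constructor <;> nlinarith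
  -- the bound function
  set B : ℝ → ℝ := fun x => M / (4 * c ^ 2) * x ^ (-2 : ℤ) with hB_def
  have hB : ∀ x ∈ Set.uIcc a δ, |ψd x| / (ψ x) ^ 2 ≤ B x := by
    intro x hx
    have hx0 := hxpos x hx
    have h1 := hψd_bd x hx
    have h2 : 2 * c * x ≤ |ψ x| := by
      have := hψ_ub x hx
      calc 2 * c * x ≤ -ψ x := by linarith
        _ ≤ |ψ x| := neg_le_abs _
    have h3 : (2 * c * x) ^ 2 ≤ (ψ x) ^ 2 := by
      rw [← sq_abs (ψ x)]
      exact pow_le_pow_left₀ (by positivity) h2 2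
    have h4 : |ψd x| / (ψ x) ^ 2 ≤ M / (2 * c * x) ^ 2 :=
      div_le_div₀ hM.le h1 (by positivity) h3
    refine h4.trans (le_of_eq ?_)
    rw [hB_def]
    simp only
    have hx2 : (x:ℝ) ^ (-2:ℤ) = (x ^ 2)⁻¹ := by
      rw [zpow_neg, zpow_two, sq]
    rw [hx2, show (2*c*x)^2 = 4*c^2*x^2 by ring, ← div_div, div_eq_mul_inv]
  have hBint : IntervalIntegrable B volume a δ := by
    apply ContinuousOn.intervalIntegrable
    apply ContinuousOn.mul continuousOn_const
    intro x hx
    exact (continuousAt_zpow₀ x (-2) (Or.inl (hxpos x hx).ne')).continuousWithinAt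
  have hψd_cont : ContinuousOn ψd (Set.uIcc a δ) := by
    intro x hx
    have h1 : ContinuousAt (fun y : ℝ => y ^ (2 * α : ℝ)) x :=
      Real.continuousAt_rpow_const x _ (Or.inl (hxpos x hx).ne')
    exact ((continuousAt_const.mul (continuousAt_const.mul h1)).sub
      continuousAt_const).continuousWithinAt
  have hφ : ∀ x ∈ Set.uIcc a δ, HasDerivAt (phase α) (ψ x) x :=
    fun x hx => hasDerivAt_phase α (hxpos x hx)
  have hψder : ∀ x ∈ Set.uIcc a δ, HasDerivAt ψ (ψd x) x :=
    fun x hx => hasDerivAt_psi α (hxpos x hx)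
  have hkey := osc_bound ha_le hL (by positivity : (0:ℝ) < 2 * c * a) hφ hψder hψd_cont hψ_le hB hBint
  refine le_trans hkey ?_
  -- compute the integral of B
  have hint : ∫ x in a..δ, B x = M / (4 * c ^ 2) * (a⁻¹ - δ⁻¹) := by
    rw [hB_def]
    simp only
    rw [intervalIntegral.integral_const_mul, integral_zpow
      (Or.inr ⟨by norm_num, by rw [hIcc]; intro h; exact absurd h.1 (not_le.mpr ha_pos)⟩)]
    norm_num
    exact Or.inl (by ring)
  have habs : |∫ x in a..δ, B x| ≤ M / (4 * c ^ 2) * a⁻¹ := by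
    rw [hint, abs_mul, abs_of_pos (by positivity : (0:ℝ) < M / (4 * c ^ 2))]
    have h1 : 0 ≤ a⁻¹ - δ⁻¹ := by
      have := one_div_le_one_div_of_le ha_pos ha_le
      simp only [one_div] at this
      linarith
    rw [abs_of_nonneg h1]
    have h2 : a⁻¹ - δ⁻¹ ≤ a⁻¹ := by
      have : 0 < δ⁻¹ := by positivity
      linarith
    exact mul_le_mul_of_nonneg_left h2 (by positivity)
  have hLa : (L * a)⁻¹ = μ ^ (-1 - 1 / (2 * α) : ℝ) := by
    rw [hL_def, ha_def, ← Real.rpow_add hμpos, ← Real.rpow_neg hμpos.le]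
    congr 1
    field_simp
    ring
  have hfinal : 2 / (L * (2 * c * a)) + (1 / L) * (M / (4 * c ^ 2) * a⁻¹) =
      (1 / c + M / (4 * c ^ 2)) * (L * a)⁻¹ := by
    field_simp
  calc 2 / (L * (2 * c * a)) + 1 / L * |∫ x in a..δ, B x|
      ≤ 2 / (L * (2 * c * a)) + (1 / L) * (M / (4 * c ^ 2) * a⁻¹) := by
        have : 0 < 1 / L := by positivity
        nlinarith
    _ = (1 / c + M / (4 * c ^ 2)) * (L * a)⁻¹ := hfinal
    _ = (1 / c + M / (4 * c ^ 2)) * μ ^ (-1 - 1 / (2 * α) : ℝ) := by rw [hLa]
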